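/- Let a ≥ 1 and let F_a: [0, ∞) → ℝ be the unique continuous solution of F_a(z) = 1 − (1/a)∫₀^z F_a(u) ω((e^{z−u} − 1)/a) du, where ω is Buchstab's function. Then F_a(z) = 1 for 0 ≤ z ≤ log(a+1), and for z > log(a+1), F_a(z) is determined by the values of F_a on [0, z − log(a+1)]; in particular the equation has a unique continuous solution on [0, ∞). -/

import Mathlib

open scoped Classical ENNReal

noncomputable section

/-- `ω` is Buchstab's function: `ω(u) = 0` for `u < 1`, `u·ω(u) = 1` on `[1,2]`,
`(u·ω(u))' = ω(u-1)` for `u > 2`, and `ω` is continuous on `[1, ∞)`. -/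
def IsBuchstab (ω : ℝ → ℝ) : Prop :=
  (∀ u < (1 : ℝ), ω u = 0) ∧
  (∀ u ∈ Set.Icc (1 : ℝ) 2, u * ω u = 1) ∧
  (∀ u > (2 : ℝ), HasDerivAt (fun t => t * ω t) (ω (u - 1)) u) ∧
  ContinuousOn ω (Set.Ici 1)

end
/-- The functional-equation property defining `F_a` on `[0, ∞)`. -/
def IsFa (ω : ℝ → ℝ) (a : ℝ) (F : ℝ → ℝ) : Prop :=
  ContinuousOn F (Set.Ici 0) ∧
    ∀ z : ℝ, 0 ≤ z →
      F z = 1 - (1 / a) * ∫ u in (0 : ℝ)..z, F u * ω ((Real.exp (z - u) - 1) / a)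

noncomputable section StmtAux

namespace Stmt15Aux

open Set MeasureTheory intervalIntegral Filter Topology

variable {ω : ℝ → ℝ} {a : ℝ}

/-- Continuous extension of `ω` (agrees with `ω` on `[1,∞)`). -/
def cext (ω : ℝ → ℝ) : ℝ → ℝ := fun v => ω (max v 1)

lemma cext_cont (hω : IsBuchstab ω) : Continuous (cext ω) :=
  hω.2.2.2.comp_continuous (continuous_id.max continuous_const) fun _ => Set.mem_Ici.mpr (le_max_right _ _)

lemma omega_eq_cext (hω : IsBuchstab ω) {v : ℝ} (hv : 1 ≤ v) : ω v = cext ω v := by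
  unfold cext; rw [max_eq_left hv]

lemma one_le_arg_iff (ha : 1 ≤ a) {t : ℝ} :
    1 ≤ (Real.exp t - 1) / a ↔ Real.log (a + 1) ≤ t := by
  have ha0 : (0:ℝ) < a := by linarith
  rw [one_le_div ha0, Real.log_le_iff_le_exp (by linarith)]
  constructor <;> intro h <;> linarith

lemma omega_arg_zero (hω : IsBuchstab ω) (ha : 1 ≤ a) {t : ℝ}
    (ht : t < Real.log (a + 1)) : ω ((Real.exp t - 1) / a) = 0 := by
  apply hω.1
  rw [← not_le, one_le_arg_iff ha]
  exact not_le.mpr ht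

lemma L_pos (ha : 1 ≤ a) : 0 < Real.log (a + 1) := Real.log_pos (by linarith)

lemma integrand_rep (hω : IsBuchstab ω) (ha : 1 ≤ a) (f : ℝ → ℝ) (z : ℝ) :
    (fun u => f u * ω ((Real.exp (z - u) - 1) / a)) =
      (Set.Iic (z - Real.log (a + 1))).indicator
        (fun u => f u * cext ω ((Real.exp (z - u) - 1) / a)) := by
  funext u
  rcases le_or_gt u (z - Real.log (a + 1)) with h | h
  · rw [Set.indicator_of_mem (show u ∈ Set.Iic (z - Real.log (a + 1)) from h),
      omega_eq_cext hω ((one_le_arg_iff ha).mpr (by linarith))]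
  · rw [Set.indicator_of_notMem
      (show u ∉ Set.Iic (z - Real.log (a + 1)) from not_le.mpr h),
      omega_arg_zero hω ha (by linarith), mul_zero]

lemma ker_cont (z : ℝ) : Continuous fun u : ℝ => (Real.exp (z - u) - 1) / a := by
  continuity

lemma ker_cont' (u : ℝ) : Continuous fun z : ℝ => (Real.exp (z - u) - 1) / a := by
  continuity

lemma integrand_intble (hω : IsBuchstab ω) (ha : 1 ≤ a) {f : ℝ → ℝ}
    (hf : Continuous f) (z p q : ℝ) :
    IntervalIntegrable (fun u => f u * ω ((Real.exp (z - u) - 1) / a)) volume p q := by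
  rw [integrand_rep hω ha f z, intervalIntegrable_iff]
  have hcont : Continuous fun u => f u * cext ω ((Real.exp (z - u) - 1) / a) :=
    hf.mul ((cext_cont hω).comp (ker_cont z))
  exact (intervalIntegrable_iff.mp (hcont.intervalIntegrable p q)).indicator
    measurableSet_Iic

/-- The basic integral operator. -/
def Tmap (ω : ℝ → ℝ) (a : ℝ) (f : ℝ → ℝ) : ℝ → ℝ := fun z =>
  1 - (1 / a) * ∫ u in (0 : ℝ)..z, f u * ω ((Real.exp (z - u) - 1) / a)

lemma omega_norm_bound (hω : IsBuchstab ω) (ha : 1 ≤ a) {C M : ℝ}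
    (hC : ∀ v ∈ Set.Icc (-(M + 1)) (M + 1), ‖cext ω v‖ ≤ C) {t : ℝ}
    (ht : Real.exp t ≤ M) : ‖ω ((Real.exp t - 1) / a)‖ ≤ max C 0 := by
  have ha0 : (0:ℝ) < a := by linarith
  have hexp : (0:ℝ) < Real.exp t := Real.exp_pos t
  have habs : |(Real.exp t - 1) / a| ≤ M + 1 := by
    rw [abs_div, abs_of_pos ha0]
    refine le_trans (div_le_self (abs_nonneg _) ha) ?_
    rw [abs_le]; constructor <;> nlinarith
  have hmem : (Real.exp t - 1) / a ∈ Set.Icc (-(M + 1)) (M + 1) := by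
    rcases abs_le.mp habs with ⟨h1, h2⟩; exact ⟨h1, h2⟩
  rcases lt_or_ge ((Real.exp t - 1) / a) 1 with h | h
  · rw [hω.1 _ h, norm_zero]; exact le_max_right _ _
  · rw [omega_eq_cext hω h]
    exact (hC _ hmem).trans (le_max_left _ _)

lemma Tmap_cont (hω : IsBuchstab ω) (ha : 1 ≤ a) {f : ℝ → ℝ} (hf : Continuous f) :
    Continuous (Tmap ω a f) := by
  have ha0 : (0:ℝ) < a := by linarith
  have hL : 0 < Real.log (a + 1) := L_pos ha
  rw [continuous_iff_continuousAt]
  intro z₀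
  set B : ℝ := z₀ + 1 with hB
  -- Step 1: for z ≤ B, the integral to z equals the integral to B.
  have key : ∀ z : ℝ, z ≤ B → Tmap ω a f z =
      1 - (1 / a) * ∫ u in (0 : ℝ)..B, f u * ω ((Real.exp (z - u) - 1) / a) := by
    intro z hzB
    have h1 := integral_add_adjacent_intervals
      (integrand_intble hω ha hf z 0 z) (integrand_intble hω ha hf z z B)
    have h2 : (∫ u in z..B, f u * ω ((Real.exp (z - u) - 1) / a)) = 0 := by
      rw [integral_congr (g := fun _ => (0:ℝ)) ?_, intervalIntegral.integral_zero]
      intro u hu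
      dsimp only
      rw [Set.uIcc_of_le hzB] at hu
      rw [omega_arg_zero hω ha (by linarith [hu.1]), mul_zero]
    unfold Tmap
    rw [← h1, h2, add_zero]
  -- Step 2: continuity of the fixed-limits parametric integral.
  set R : ℝ := |z₀| + 1 with hR
  set M : ℝ := Real.exp (2 * R) with hM
  obtain ⟨C, hC⟩ := (isCompact_Icc (a := -(M + 1)) (b := M + 1)).exists_bound_of_continuousOn
    (cext_cont hω).continuousOn
  have hIcont : ContinuousAt
      (fun z => ∫ u in (0 : ℝ)..B, f u * ω ((Real.exp (z - u) - 1) / a)) z₀ := by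
    apply intervalIntegral.continuousAt_of_dominated_interval
      (bound := fun u => |f u| * max C 0)
    · exact Eventually.of_forall fun z =>
        (intervalIntegrable_iff.mp (integrand_intble hω ha hf z 0 B)).aestronglyMeasurable
    · filter_upwards [Metric.ball_mem_nhds z₀ one_pos] with z hz
      refine Eventually.of_forall fun u hu => ?_
      have hz1 : |z - z₀| < 1 := by
        rw [Metric.mem_ball, Real.dist_eq] at hz; exact hz
      have hzabs : |z| ≤ R := by
        calc |z| = |(z - z₀) + z₀| := by ring_nf
        _ ≤ |z - z₀| + |z₀| := abs_add_le _ _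
        _ ≤ R := by rw [hR]; linarith
      have huabs : |u| ≤ R := by
        rcases Set.mem_uIoc.mp hu with ⟨h1, h2⟩ | ⟨h1, h2⟩
        · rw [abs_of_pos h1]
          refine h2.trans ?_
          rw [hB, hR]; have := le_abs_self z₀; linarith
        · rw [abs_of_nonpos h2]
          have hB0 : B ≥ -(R) := by
            rw [hB, hR]; have := neg_abs_le z₀; linarith
          linarith
      have hzu : z - u ≤ 2 * R := by
        have h1 := le_abs_self z; have h2 := neg_abs_le u; linarith [abs_le.mp hzabs,
          abs_le.mp huabs]
      have hexp : Real.exp (z - u) ≤ M := by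
        rw [hM]; exact Real.exp_le_exp.mpr hzu
      rw [norm_mul, Real.norm_eq_abs (f u)]
      gcongr
      exact omega_norm_bound hω ha hC hexp
    · exact (hf.abs.mul continuous_const).intervalIntegrable _ _
    · -- a.e. continuity in the parameter
      have hne : ∀ᵐ u : ℝ, u ≠ z₀ - Real.log (a + 1) := by
        rw [MeasureTheory.ae_iff]
        have : {u : ℝ | ¬u ≠ z₀ - Real.log (a + 1)} = {z₀ - Real.log (a + 1)} := by
          ext u; simp
        rw [this]; exact Real.volume_singleton
      filter_upwards [hne] with u hu _
      have hker := (ker_cont' (a := a) u).continuousAt (x := z₀)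
      rcases lt_trichotomy ((Real.exp (z₀ - u) - 1) / a) 1 with h1 | h1 | h1
      · have hev : (fun z => f u * ω ((Real.exp (z - u) - 1) / a)) =ᶠ[𝓝 z₀]
            fun _ => 0 := by
          filter_upwards [hker.eventually_lt_const h1] with z hz
          rw [hω.1 _ hz, mul_zero]
        exact (continuousAt_congr hev).mpr continuousAt_const
      · exfalso
        have h2 : Real.exp (z₀ - u) = a + 1 := by
          field_simp at h1; linarith
        have h3 : z₀ - u = Real.log (a + 1) := by
          rw [← h2, Real.log_exp]
        exact hu (by linarith)
      · have hev : (fun z => f u * ω ((Real.exp (z - u) - 1) / a)) =ᶠ[𝓝 z₀]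
            fun z => f u * cext ω ((Real.exp (z - u) - 1) / a) := by
          filter_upwards [hker.eventually_const_lt h1] with z hz
          rw [omega_eq_cext hω hz.le]
        exact (continuousAt_congr hev).mpr
          ((continuous_const.mul ((cext_cont hω).comp (ker_cont' u))).continuousAt)
  -- Conclude
  have hev : Tmap ω a f =ᶠ[𝓝 z₀]
      fun z => 1 - (1 / a) * ∫ u in (0 : ℝ)..B, f u * ω ((Real.exp (z - u) - 1) / a) := by
    filter_upwards [Iio_mem_nhds (show z₀ < B by rw [hB]; linarith)] with z hz
    exact key z hz.le
  exact (continuousAt_congr hev).mpr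
    (continuousAt_const.sub (continuousAt_const.mul hIcont))

lemma Tmap_congr (hω : IsBuchstab ω) (ha : 1 ≤ a) {f g : ℝ → ℝ} {c : ℝ} (hc : 0 ≤ c)
    (h : Set.EqOn f g (Set.Icc 0 c)) :
    Set.EqOn (Tmap ω a f) (Tmap ω a g) (Set.Icc 0 (c + Real.log (a + 1))) := by
  intro z hz
  unfold Tmap
  have : (∫ u in (0:ℝ)..z, f u * ω ((Real.exp (z - u) - 1) / a)) =
      ∫ u in (0:ℝ)..z, g u * ω ((Real.exp (z - u) - 1) / a) := by
    apply integral_congr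
    intro u hu
    dsimp only
    rw [Set.uIcc_of_le hz.1] at hu
    rcases le_or_gt u (z - Real.log (a + 1)) with h' | h'
    · rw [h ⟨hu.1, by linarith [hz.2]⟩]
    · rw [omega_arg_zero hω ha (by linarith), mul_zero, mul_zero]
  rw [this]

/-- Picard-type iterates. -/
def seqF (ω : ℝ → ℝ) (a : ℝ) : ℕ → ℝ → ℝ
  | 0 => fun _ => 1
  | n + 1 => Tmap ω a (seqF ω a n)

lemma seqF_cont (hω : IsBuchstab ω) (ha : 1 ≤ a) : ∀ n, Continuous (seqF ω a n)
  | 0 => continuous_const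
  | n + 1 => Tmap_cont hω ha (seqF_cont hω ha n)

lemma Tmap_zero (f : ℝ → ℝ) : Tmap ω a f 0 = 1 := by
  unfold Tmap; rw [integral_same]; ring

lemma seqF_stab (hω : IsBuchstab ω) (ha : 1 ≤ a) :
    ∀ n, Set.EqOn (seqF ω a (n + 1)) (seqF ω a n)
      (Set.Icc 0 (n * Real.log (a + 1)))
  | 0 => by
    intro z hz
    have hz0 : z = 0 := le_antisymm (by simpa using hz.2) hz.1
    subst hz0
    show Tmap ω a _ 0 = 1
    exact Tmap_zero _
  | n + 1 => by
    have := Tmap_congr hω ha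
      (mul_nonneg (Nat.cast_nonneg n) (L_pos ha).le) (seqF_stab hω ha n)
    intro z hz
    apply this
    refine ⟨hz.1, ?_⟩
    have := hz.2; push_cast at this ⊢; linarith

lemma seqF_stab' (hω : IsBuchstab ω) (ha : 1 ≤ a) {m n : ℕ} (hmn : n ≤ m) :
    Set.EqOn (seqF ω a m) (seqF ω a n) (Set.Icc 0 (n * Real.log (a + 1))) := by
  obtain ⟨k, rfl⟩ := Nat.exists_eq_add_of_le hmn
  clear hmn
  induction k with
  | zero => intro z _; rfl
  | succ k ih =>
    intro z hz
    have h1 : z ∈ Set.Icc 0 ((n + k : ℕ) * Real.log (a + 1)) := by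
      refine ⟨hz.1, hz.2.trans ?_⟩
      have hL := (L_pos ha).le
      push_cast
      nlinarith [Nat.cast_nonneg (α := ℝ) k]
    have : seqF ω a (n + (k + 1)) z = seqF ω a (n + k) z := by
      have := seqF_stab hω ha (n + k) h1
      convert this using 2 <;> omega
    rw [this, ih hz]

/-- The solution, by stabilization of the iterates. -/
def Fsol (ω : ℝ → ℝ) (a : ℝ) : ℝ → ℝ := fun z =>
  seqF ω a (⌈z / Real.log (a + 1)⌉₊ + 1) z

lemma le_nL (ha : 1 ≤ a) (z : ℝ) :
    z ≤ (⌈z / Real.log (a + 1)⌉₊ + 1 : ℕ) * Real.log (a + 1) := by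
  have hL := L_pos ha
  have h1 : z / Real.log (a + 1) ≤ ⌈z / Real.log (a + 1)⌉₊ := Nat.le_ceil _
  have h2 : z ≤ (⌈z / Real.log (a + 1)⌉₊ : ℝ) * Real.log (a + 1) :=
    (div_le_iff₀ hL).mp h1
  push_cast
  nlinarith

lemma Fsol_eq (hω : IsBuchstab ω) (ha : 1 ≤ a) (n : ℕ) :
    Set.EqOn (Fsol ω a) (seqF ω a n) (Set.Icc 0 (n * Real.log (a + 1))) := by
  intro z hz
  set m : ℕ := ⌈z / Real.log (a + 1)⌉₊ + 1 with hm
  have hzm : z ≤ (m : ℝ) * Real.log (a + 1) := le_nL ha z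
  have h1 : Fsol ω a z = seqF ω a m z := rfl
  have h2 : seqF ω a (max m n) z = seqF ω a m z :=
    seqF_stab' hω ha (le_max_left m n) ⟨hz.1, hzm⟩
  have h3 : seqF ω a (max m n) z = seqF ω a n z :=
    seqF_stab' hω ha (le_max_right m n) hz
  rw [h1, ← h2, h3]

lemma Fsol_contOn (hω : IsBuchstab ω) (ha : 1 ≤ a) :
    ContinuousOn (Fsol ω a) (Set.Ici 0) := by
  have hL := L_pos ha
  intro z₀ hz₀
  set n : ℕ := ⌈z₀ / Real.log (a + 1)⌉₊ + 2 with hn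
  have hzlt : z₀ < (n : ℝ) * Real.log (a + 1) := by
    have := le_nL ha z₀
    have : z₀ ≤ ((⌈z₀ / Real.log (a + 1)⌉₊ + 1 : ℕ) : ℝ) * Real.log (a + 1) := this
    push_cast [hn] at this ⊢
    nlinarith
  rw [← continuousWithinAt_inter' (t := Set.Iio ((n : ℝ) * Real.log (a + 1)))
    (mem_nhdsWithin_of_mem_nhds (Iio_mem_nhds hzlt))]
  refine ContinuousWithinAt.congr
    ((seqF_cont hω ha n).continuousAt.continuousWithinAt) ?_ ?_
  · intro y hy
    exact Fsol_eq hω ha n ⟨hy.1, hy.2.le⟩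
  · exact Fsol_eq hω ha n ⟨hz₀, hzlt.le⟩

lemma Fsol_eqn (hω : IsBuchstab ω) (ha : 1 ≤ a) {z : ℝ} (hz : 0 ≤ z) :
    Fsol ω a z = Tmap ω a (Fsol ω a) z := by
  have hL := L_pos ha
  set n : ℕ := ⌈z / Real.log (a + 1)⌉₊ + 1 with hn
  have hzn : z ≤ (n : ℝ) * Real.log (a + 1) := le_nL ha z
  have h1 : Tmap ω a (Fsol ω a) z = Tmap ω a (seqF ω a n) z := by
    apply Tmap_congr hω ha (mul_nonneg (Nat.cast_nonneg n) hL.le) (Fsol_eq hω ha n)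
    exact ⟨hz, by linarith⟩
  have h2 : Tmap ω a (seqF ω a n) z = seqF ω a (n + 1) z := rfl
  have h3 : seqF ω a (n + 1) z = Fsol ω a z := by
    refine (Fsol_eq hω ha (n + 1) ⟨hz, ?_⟩).symm
    have hmono : (n : ℝ) * Real.log (a + 1) ≤ ((n + 1 : ℕ) : ℝ) * Real.log (a + 1) := by
      push_cast; nlinarith
    linarith
  rw [h1, h2, h3]

lemma Fsol_isFa (hω : IsBuchstab ω) (ha : 1 ≤ a) : IsFa ω a (Fsol ω a) := by
  refine ⟨Fsol_contOn hω ha, fun z hz => ?_⟩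
  exact Fsol_eqn hω ha hz

lemma isFa_eq_one (hω : IsBuchstab ω) (ha : 1 ≤ a) {F : ℝ → ℝ} (hF : IsFa ω a F)
    {z : ℝ} (hz : z ∈ Set.Icc (0:ℝ) (Real.log (a + 1))) : F z = 1 := by
  rw [hF.2 z hz.1]
  have h0 : (∫ u in (0:ℝ)..z, F u * ω ((Real.exp (z - u) - 1) / a)) = 0 := by
    rw [intervalIntegral.integral_congr_ae (g := fun _ => (0:ℝ)) ?_, intervalIntegral.integral_zero]
    refine Eventually.of_forall fun u hu => ?_
    rw [Set.uIoc_of_le hz.1] at hu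
    rw [omega_arg_zero hω ha (by linarith [hu.1, hz.2]), mul_zero]
  rw [h0, mul_zero, sub_zero]

lemma isFa_unique (hω : IsBuchstab ω) (ha : 1 ≤ a) {F G : ℝ → ℝ}
    (hF : IsFa ω a F) (hG : IsFa ω a G) : Set.EqOn F G (Set.Ici 0) := by
  have hL := L_pos ha
  have claim : ∀ n : ℕ, Set.EqOn F G (Set.Icc 0 (n * Real.log (a + 1))) := by
    intro n
    induction n with
    | zero =>
      intro z hz
      have hz0 : z = 0 := le_antisymm (by simpa using hz.2) hz.1
      subst hz0
      rw [isFa_eq_one hω ha hF ⟨le_rfl, hL.le⟩, isFa_eq_one hω ha hG ⟨le_rfl, hL.le⟩]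
    | succ n ih =>
      intro z hz
      rw [hF.2 z hz.1, hG.2 z hz.1]
      have : (∫ u in (0:ℝ)..z, F u * ω ((Real.exp (z - u) - 1) / a)) =
          ∫ u in (0:ℝ)..z, G u * ω ((Real.exp (z - u) - 1) / a) := by
        apply integral_congr
        intro u hu
        dsimp only
        rw [Set.uIcc_of_le hz.1] at hu
        rcases le_or_gt u (z - Real.log (a + 1)) with h' | h'
        · have hzn : z ≤ ((n : ℝ) + 1) * Real.log (a + 1) := by
            have := hz.2; push_cast at this; linarith
          exact congrArg (· * ω ((Real.exp (z - u) - 1) / a))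
            (ih ⟨hu.1, by nlinarith⟩)
        · rw [omega_arg_zero hω ha (by linarith), mul_zero, mul_zero]
      rw [this]
  intro z hz
  obtain ⟨n, hn⟩ := exists_nat_ge (z / Real.log (a + 1))
  exact claim n ⟨hz, (div_le_iff₀ hL).mp hn⟩

end Stmt15Aux

end StmtAux

theorem stmt15 (ω : ℝ → ℝ) (hω : IsBuchstab ω) (a : ℝ) (ha : 1 ≤ a) :
    (∃ F : ℝ → ℝ, IsFa ω a F) ∧
      (∀ F G : ℝ → ℝ, IsFa ω a F → IsFa ω a G → Set.EqOn F G (Set.Ici 0)) ∧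
      ∀ F : ℝ → ℝ, IsFa ω a F → ∀ z ∈ Set.Icc (0 : ℝ) (Real.log (a + 1)), F z = 1 := by
  exact ⟨⟨Stmt15Aux.Fsol ω a, Stmt15Aux.Fsol_isFa hω ha⟩,
    fun F G hF hG => Stmt15Aux.isFa_unique hω ha hF hG,
    fun F hF z hz => Stmt15Aux.isFa_eq_one hω ha hF hz⟩
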